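/- The q-shuffle product * on 𝓔 is commutative: 𝔞 * 𝔟 = 𝔟 * 𝔞 for all 𝔞, 𝔟 ∈ 𝓔. In particular, (𝓔, *) is a commutative (not necessarily associative) 𝔽_p-algebra with unit 1. -/

import Mathlib

/-- `Δ^{i,j}_{a,b} = (-1)^{a-1} C(j-1,a-1) + (-1)^{b-1} C(j-1,b-1) ∈ 𝔽_p`. -/
def Del (p : ℕ) (a b i j : ℕ) : ZMod p :=
  (-1 : ZMod p) ^ (a - 1) * ((j - 1).choose (a - 1) : ZMod p) +
    (-1 : ZMod p) ^ (b - 1) * ((j - 1).choose (b - 1) : ZMod p)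

/-- A word of the monoid `𝒯` (the free monoid on the letters `x_k, y_ℓ`, `k, ℓ ∈ ℕ+`,
modulo the commutation relations `x_k y_ℓ = y_ℓ x_k`): since every `x`-letter commutes with
every `y`-letter, a word has the unique normal form `x_𝔲 y_𝔳`, and is encoded as the pair
of lists `(𝔲, 𝔳)`. -/
abbrev EWord := List ℕ+ × List ℕ+

/-- The `𝔽_p`-vector space `𝓔` with basis `𝒯`. -/
abbrev ESp (p : ℕ) := EWord →₀ ZMod p

/-- The basis word `x_𝔲 y_𝔳` of `𝓔`. -/
noncomputable def ew (p : ℕ) (z : EWord) : ESp p := Finsupp.single z 1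

/-- Left concatenation by the letter `x_a`, extended `𝔽_p`-linearly. -/
noncomputable def xcons (p : ℕ) (a : ℕ+) (r : ESp p) : ESp p :=
  Finsupp.mapDomain (fun z => (a :: z.1, z.2)) r

/-- Left concatenation by the letter `y_a`, extended `𝔽_p`-linearly. -/
noncomputable def ycons (p : ℕ) (a : ℕ+) (r : ESp p) : ESp p :=
  Finsupp.mapDomain (fun z => (z.1, a :: z.2)) r

/-- `∑_{i+j = a+b, i,j ≥ 1, (q-1) ∣ j} f i j`. -/
noncomputable def decSum {M : Type*} [AddCommMonoid M] (q : ℕ) (a b : ℕ+)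
    (f : ℕ+ → ℕ+ → M) : M :=
  ∑ j ∈ (Finset.Ioo 0 ((a : ℕ) + (b : ℕ))).attach,
    if (q - 1) ∣ (j : ℕ) then
      f ⟨(a : ℕ) + (b : ℕ) - (j : ℕ), by
            have h := Finset.mem_Ioo.mp j.2; omega⟩
        ⟨(j : ℕ), (Finset.mem_Ioo.mp j.2).1⟩
    else 0

/-- Fuelled version of the `q`-shuffle product `*` on `𝓔`, on basis words, following the
inductive definition (induction on the sum of the depths):
(1) `1 * 𝔞 = 𝔞 * 1 = 𝔞`;
(2) `x_𝔞 * y_𝔟 = x_𝔞 y_𝔟 = y_𝔟 x_𝔞 = y_𝔟 * x_𝔞`;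
(3) `x_𝔞 * x_𝔟 = x_{a₁}(x_{𝔞⁽¹⁾} * x_𝔟) + x_{b₁}(x_𝔞 * x_{𝔟⁽¹⁾}) + x_{a₁+b₁}(x_{𝔞⁽¹⁾} * x_{𝔟⁽¹⁾})
     + ∑_{i+j=a₁+b₁, (q-1)∣j} Δ^{i,j}_{a₁,b₁} x_i((x_{𝔞⁽¹⁾} * x_{𝔟⁽¹⁾}) * x_j)`;
(4) `y_𝔞 * y_𝔟 = y_{a₁}(y_{𝔞⁽¹⁾} * y_𝔟) + y_{b₁}(y_𝔞 * y_{𝔟⁽¹⁾}) + y_{a₁+b₁}(y_{𝔞⁽¹⁾} * y_{𝔟⁽¹⁾})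
     + ∑_{i+j=a₁+b₁, (q-1)∣j} Δ^{i,j}_{a₁,b₁} y_i((y_{𝔞⁽¹⁾} * y_{𝔟⁽¹⁾}) * x_j)
     + ∑_{i+j=a₁+b₁, (q-1)∣j} Δ^{i,j}_{a₁,b₁} y_i((y_{𝔞⁽¹⁾} * y_{𝔟⁽¹⁾}) * y_j)`;
(5) `(x_𝔞 y_𝔟) * (x_{𝔞'} y_{𝔟'}) = (x_𝔞 * x_{𝔞'}) * (y_𝔟 * y_{𝔟'})`,
with `*` extended `𝔽_p`-bilinearly.  For sufficient fuel (which `mulE` below always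
supplies) the recursion terminates, since each step strictly decreases the total depth. -/
noncomputable def mulF (p q : ℕ) : ℕ → EWord → EWord → ESp p
  | 0, _, _ => 0
  | _ + 1, ([], []), z => ew p z
  | _ + 1, w, ([], []) => ew p w
  | _ + 1, (u, []), ([], v) => ew p (u, v)
  | _ + 1, ([], v), (u, []) => ew p (u, v)
  | n + 1, (a :: as, []), (b :: bs, []) =>
      xcons p a (mulF p q n (as, []) (b :: bs, [])) +
        xcons p b (mulF p q n (a :: as, []) (bs, [])) +
        xcons p (a + b) (mulF p q n (as, []) (bs, [])) +
        decSum q a b (fun i j =>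
          Del p (a : ℕ) (b : ℕ) (i : ℕ) (j : ℕ) •
            xcons p i ((mulF p q n (as, []) (bs, [])).sum fun w c => c • mulF p q n w ([j], [])))
  | n + 1, ([], a :: as), ([], b :: bs) =>
      ycons p a (mulF p q n ([], as) ([], b :: bs)) +
        ycons p b (mulF p q n ([], a :: as) ([], bs)) +
        ycons p (a + b) (mulF p q n ([], as) ([], bs)) +
        decSum q a b (fun i j =>
          Del p (a : ℕ) (b : ℕ) (i : ℕ) (j : ℕ) •
            ycons p i ((mulF p q n ([], as) ([], bs)).sum fun w c =>
              c • mulF p q n w ([j], []))) +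
        decSum q a b (fun i j =>
          Del p (a : ℕ) (b : ℕ) (i : ℕ) (j : ℕ) •
            ycons p i ((mulF p q n ([], as) ([], bs)).sum fun w c =>
              c • mulF p q n w ([], [j])))
  | n + 1, (u, v), (u', v') =>
      (mulF p q n (u, []) (u', [])).sum fun w c =>
        (mulF p q n ([], v) ([], v')).sum fun z e => (c * e) • mulF p q n w z

/-- The `q`-shuffle product of two basis words of `𝓔`.  The fuel
`2 (|𝔲| + |𝔳| + |𝔲'| + |𝔳'|) + 8` always suffices for the recursion. -/
noncomputable def mulW (p q : ℕ) (w z : EWord) : ESp p :=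
  mulF p q (2 * (w.1.length + w.2.length + z.1.length + z.2.length) + 8) w z

/-- The `q`-shuffle product `*` on `𝓔`, the `𝔽_p`-bilinear extension of `mulW`. -/
noncomputable def mulE (p q : ℕ) (r s : ESp p) : ESp p :=
  r.sum fun w c => s.sum fun z e => (c * e) • mulW p q w z

section Aux
variable (p q : ℕ)

private lemma Del_symm (a b i j : ℕ) : Del p a b i j = Del p b a i j := add_comm _ _

private noncomputable def dterm {M : Type*} [AddCommMonoid M] (q : ℕ) (s : ℕ)
    (f : ℕ+ → ℕ+ → M) (j : ℕ) : M :=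
  if (q - 1) ∣ j then
    (if h : 0 < s - j ∧ 0 < j then f ⟨s - j, h.1⟩ ⟨j, h.2⟩ else 0)
  else 0

private lemma decSum_eq {M : Type*} [AddCommMonoid M] (a b : ℕ+) (f : ℕ+ → ℕ+ → M) :
    decSum q a b f = ∑ j ∈ Finset.Ioo 0 ((a : ℕ) + (b : ℕ)),
      dterm q ((a : ℕ) + (b : ℕ)) f j := by
  unfold decSum
  rw [← Finset.sum_attach (Finset.Ioo 0 ((a : ℕ) + (b : ℕ)))
    (dterm q ((a : ℕ) + (b : ℕ)) f)]
  refine Finset.sum_congr rfl fun j _ => ?_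
  have hj := Finset.mem_Ioo.mp j.2
  have h : 0 < (a : ℕ) + (b : ℕ) - (j : ℕ) ∧ 0 < (j : ℕ) := ⟨by omega, hj.1⟩
  unfold dterm
  split <;> rfl

private lemma decSum_comm {M : Type*} [AddCommMonoid M] (a b : ℕ+) (f : ℕ+ → ℕ+ → M) :
    decSum q a b f = decSum q b a f := by
  rw [decSum_eq, decSum_eq, add_comm (b : ℕ) (a : ℕ)]

private lemma decSum_congr {M : Type*} [AddCommMonoid M] (a b : ℕ+) (f g : ℕ+ → ℕ+ → M)
    (h : ∀ i j, f i j = g i j) : decSum q a b f = decSum q b a g := by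
  rw [decSum_comm q b a g]
  exact Finset.sum_congr rfl fun j _ => by split; exacts [h _ _, rfl]

private lemma mulF_zero_left (m : ℕ) (z : EWord) : mulF p q (m+1) ([], []) z = ew p z := by
  rcases z with ⟨u, v⟩
  rcases u with _ | ⟨b, bs⟩ <;> rcases v with _ | ⟨d, ds⟩ <;> simp [mulF]

private lemma mulF_zero_right (m : ℕ) (w : EWord) : mulF p q (m+1) w ([], []) = ew p w := by
  rcases w with ⟨u, v⟩
  rcases u with _ | ⟨b, bs⟩ <;> rcases v with _ | ⟨d, ds⟩ <;> simp [mulF]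

end Aux

private lemma mulF_comm (p q : ℕ) : ∀ n w z, mulF p q n w z = mulF p q n z w := by
  intro n
  induction n with
  | zero => intro w z; rfl
  | succ n ih =>
    rintro ⟨u, v⟩ ⟨u', v'⟩
    rcases u with _ | ⟨a, as⟩ <;> rcases v with _ | ⟨c, cs⟩ <;>
      rcases u' with _ | ⟨b, bs⟩ <;> rcases v' with _ | ⟨d, ds⟩ <;>
      simp only [mulF] <;> try rfl
    -- y-case
    · rw [ih (([], ds) : EWord) (([], c :: cs) : EWord),
        ih (([], d :: ds) : EWord) (([], cs) : EWord),
        ih (([], ds) : EWord) (([], cs) : EWord), add_comm d c]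
      simp only [Del_symm p (d : ℕ) (c : ℕ)]
      rw [decSum_comm q d c, decSum_comm q d c]
      abel
    · rw [ih ((b :: bs, []) : EWord) (([], []) : EWord),
        ih (([], d :: ds) : EWord) (([], c :: cs) : EWord)]
    -- x-case
    · rw [ih ((bs, []) : EWord) ((a :: as, []) : EWord),
        ih ((b :: bs, []) : EWord) ((as, []) : EWord),
        ih ((bs, []) : EWord) ((as, []) : EWord), add_comm b a]
      simp only [Del_symm p (b : ℕ) (a : ℕ)]
      rw [decSum_comm q b a]
      abel
    · rw [ih ((b :: bs, []) : EWord) ((a :: as, []) : EWord),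
        ih (([], d :: ds) : EWord) (([], []) : EWord)]
    · rw [ih (([], []) : EWord) ((a :: as, []) : EWord),
        ih (([], d :: ds) : EWord) (([], c :: cs) : EWord)]
    · rw [ih ((b :: bs, []) : EWord) ((a :: as, []) : EWord),
        ih (([], []) : EWord) (([], c :: cs) : EWord)]
    · rw [ih ((b :: bs, []) : EWord) ((a :: as, []) : EWord),
        ih (([], d :: ds) : EWord) (([], c :: cs) : EWord)]

private lemma mulW_comm (p q : ℕ) (w z : EWord) : mulW p q w z = mulW p q z w := by
  unfold mulW
  rw [show w.1.length + w.2.length + z.1.length + z.2.length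
      = z.1.length + z.2.length + w.1.length + w.2.length from by omega,
    mulF_comm]

private lemma mulW_one_left (p q : ℕ) (z : EWord) : mulW p q ([], []) z = ew p z :=
  mulF_zero_left p q _ z

private lemma mulW_one_right (p q : ℕ) (w : EWord) : mulW p q w ([], []) = ew p w :=
  mulF_zero_right p q _ w

theorem mulE_comm (p q : ℕ) [Fact p.Prime] (n : ℕ) (hn : 0 < n) (hq : q = p ^ n) :
    (∀ r s : ESp p, mulE p q r s = mulE p q s r) ∧
      (∀ r : ESp p, mulE p q (ew p ([], [])) r = r ∧ mulE p q r (ew p ([], [])) = r) := by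
  constructor
  · intro r s
    unfold mulE
    rw [Finsupp.sum_comm]
    refine Finsupp.sum_congr fun z _ => Finsupp.sum_congr fun w _ => ?_
    rw [mul_comm, mulW_comm]
  · intro r
    constructor
    · unfold mulE
      rw [ew, Finsupp.sum_single_index (by simp)]
      refine Eq.trans (Finsupp.sum_congr fun z _ => ?_) r.sum_single
      rw [one_mul, mulW_one_left, ew, Finsupp.smul_single, smul_eq_mul, mul_one]
    · unfold mulE
      refine Eq.trans (Finsupp.sum_congr fun w _ => ?_) r.sum_single
      rw [ew, Finsupp.sum_single_index (by simp), mul_one, mulW_one_right, ew,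
        Finsupp.smul_single, smul_eq_mul, mul_one]
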